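/- Let Ũ₁ := U₁ U_odd, where U₁ := Π_{j=2}^d Π_{x: x^{(j)} even, σ} e^{(iπ/2) n_{x,σ}} and U_odd is the particle-hole transformation on odd sites. With Γ_x^{(1)} := a†_{x,↑}a†_{x,↓} + a_{x,↓}a_{x,↑}, Γ_x^{(2)} := i(a†_{x,↑}a†_{x,↓} − a_{x,↓}a_{x,↑}), and H̄_int,j := (g/4)Σ_x[Γ_x^{(1)}+Γ_{x+e_j}^{(1)}]² − (g/4)Σ_x[Γ_x^{(2)}−Γ_{x+e_j}^{(2)}]², one has: (Ũ₁)† H̄_int,1 Ũ₁ = (g/4)Σ_{x∈Λ}[Γ_x^{(1)}−Γ_{x+e_1}^{(1)}]² − (g/4)Σ_{x∈Λ}[Γ_x^{(2)}−Γ_{x+e_1}^{(2)}]², and for each j = 2,…,d, (Ũ₁)† H̄_int,j Ũ₁ = (g/4)Σ_{x∈Λ}[Γ_x^{(1)}+Γ_{x+e_j}^{(1)}]² − (g/4)Σ_{x∈Λ}[Γ_x^{(2)}+Γ_{x+e_j}^{(2)}]². -/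

import Mathlib

open Complex Matrix
open scoped ComplexOrder

namespace PiFlux

/-- `2*L ≠ 0` when `L ≠ 0`, so that `ZMod (2*L)` is a finite type. -/
instance instNeZero2L (L : ℕ) [NeZero L] : NeZero (2 * L) :=
  ⟨by have := NeZero.ne L; omega⟩

/-- A site of the periodic hypercubic lattice `Λ = {-L+1,…,L}^d` with periodic
boundary conditions: each coordinate is an element of `ZMod (2*L)`. -/
abbrev Site (L d : ℕ) := Fin d → ZMod (2 * L)

/-- The integer value in `{-L+1,…,L}` of a periodic coordinate. -/
def coordVal (L : ℕ) (z : ZMod (2 * L)) : ℤ := (z.val : ℤ) - (L : ℤ) + 1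

/-- The coordinate sum `x⁽¹⁾ + ⋯ + x⁽ᵈ⁾` of a site. -/
def coordSum (L d : ℕ) (x : Site L d) : ℤ := ∑ i, coordVal L (x i)

/-- `x + e_i`, with the periodic identification `L + 1 ≡ -L + 1`. -/
def shift (L d : ℕ) (i : Fin d) (x : Site L d) : Site L d :=
  Function.update x i (x i + 1)

/-- `θ_i(x) := x⁽¹⁾ + ⋯ + x⁽ⁱ⁻¹⁾`, plus `1` if `x⁽ⁱ⁾ = L`  (for the first
direction the sum is empty, so `θ_1(x)` is the indicator of `x⁽¹⁾ = L`). -/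
def theta (L d : ℕ) (i : Fin d) (x : Site L d) : ℤ :=
  (∑ k ∈ Finset.univ.filter (fun k => k < i), coordVal L (x k))
    + (if coordVal L (x i) = (L : ℤ) then 1 else 0)

/-- A classical U(1) gauge field: the real number `Ã_{x,x+e_i}` attached to the
positively oriented bond from `x` to `x + e_i`; the value on the reversed bond
is `Ã_{x+e_i,x} = -Ã_{x,x+e_i}`. -/
abbrev Gauge (L d : ℕ) := Site L d → Fin d → ℝ

/-- The canonical anticommutation relations for the fermion operators
`a x σ` (with `σ : Bool`; `true` = spin up, `false` = spin down). -/
def CAR {L d : ℕ} {F : Type*} [Fintype F] [DecidableEq F]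
    (a : Site L d → Bool → Matrix F F ℂ) : Prop :=
  (∀ x y σ τ, a x σ * (a y τ)ᴴ + (a y τ)ᴴ * a x σ
      = if x = y ∧ σ = τ then (1 : Matrix F F ℂ) else 0) ∧
  (∀ x y σ τ, a x σ * a y τ + a y τ * a x σ = 0)

variable {F : Type*} [Fintype F] [DecidableEq F]

/-- `Γ_x^{(1)} := a†_{x,↑} a†_{x,↓} + a_{x,↓} a_{x,↑}`. -/
noncomputable def Gamma1 (L d : ℕ) (a : Site L d → Bool → Matrix F F ℂ)
    (x : Site L d) : Matrix F F ℂ :=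
  (a x true)ᴴ * (a x false)ᴴ + a x false * a x true

/-- `Γ_x^{(2)} := i (a†_{x,↑} a†_{x,↓} - a_{x,↓} a_{x,↑})`. -/
noncomputable def Gamma2 (L d : ℕ) (a : Site L d → Bool → Matrix F F ℂ)
    (x : Site L d) : Matrix F F ℂ :=
  I • ((a x true)ᴴ * (a x false)ᴴ - a x false * a x true)

/-- `H̄_int,j := (g/4) Σ_x [Γ_x⁽¹⁾ + Γ_{x+e_j}⁽¹⁾]² - (g/4) Σ_x [Γ_x⁽²⁾ - Γ_{x+e_j}⁽²⁾]²`. -/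
noncomputable def HbarIntJ (L d : ℕ) [NeZero L] (g : ℝ)
    (a : Site L d → Bool → Matrix F F ℂ) (j : Fin d) : Matrix F F ℂ :=
  ((g : ℂ) / 4) • ∑ x : Site L d, (Gamma1 L d a x + Gamma1 L d a (shift L d j x)) ^ 2
    - ((g : ℂ) / 4) • ∑ x : Site L d, (Gamma2 L d a x - Gamma2 L d a (shift L d j x)) ^ 2

/-- The FILS operator `u_{x,σ} = [Π_{(y,σ') ≠ (x,σ)} (1 - 2 n_{y,σ'})] (a†_{x,σ} + a_{x,σ})`
(the factors `1 - 2 n_{y,σ'}` mutually commute, so the ordered product below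
represents the product over all pairs `(y,σ') ≠ (x,σ)`). -/
noncomputable def klein (L d : ℕ) [NeZero L]
    (a : Site L d → Bool → Matrix F F ℂ) (x : Site L d) (σ : Bool) : Matrix F F ℂ :=
  (((Finset.univ : Finset (Site L d × Bool)).filter (fun p => p ≠ (x, σ))).toList.map
      (fun p => (1 : Matrix F F ℂ) - (2 : ℂ) • ((a p.1 p.2)ᴴ * a p.1 p.2))).prod
    * ((a x σ)ᴴ + a x σ)

/-- `U_odd := Π_{σ} Π_{x ∈ Λ_odd} u_{x,σ}` (the factors mutually commute, so the
ordered product below represents the product over all `(x,σ)` with `x ∈ Λ_odd`). -/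
noncomputable def Uodd (L d : ℕ) [NeZero L]
    (a : Site L d → Bool → Matrix F F ℂ) : Matrix F F ℂ :=
  (((Finset.univ : Finset (Site L d × Bool)).filter
      (fun p => Odd (coordSum L d p.1))).toList.map
      (fun p => klein L d a p.1 p.2)).prod

/-- `U₁ := Π_{j=2}^d Π_{x : x⁽ʲ⁾ even} Π_σ e^{(iπ/2) n_{x,σ}}
   = exp[(iπ/2) Σ_{j≥2} Σ_{x : x⁽ʲ⁾ even} Σ_σ n_{x,σ}]`
(the number operators commute, so the product of exponentials equals the
exponential of the sum). -/
noncomputable def U1 (L d : ℕ) [NeZero L]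
    (a : Site L d → Bool → Matrix F F ℂ) : Matrix F F ℂ :=
  NormedSpace.exp (((Real.pi : ℂ) / 2 * I) • ∑ σ : Bool,
    ∑ j ∈ Finset.univ.filter (fun j : Fin d => j.val ≠ 0),
      ∑ x ∈ Finset.univ.filter (fun x : Site L d => Even (coordVal L (x j))),
        (a x σ)ᴴ * a x σ)

/-- `Ũ₁ := U₁ U_odd`. -/
noncomputable def Utilde1 (L d : ℕ) [NeZero L]
    (a : Site L d → Bool → Matrix F F ℂ) : Matrix F F ℂ :=
  U1 L d a * Uodd L d a

/- ------------------------------------------------------------------ -/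
/- Auxiliary machinery                                                 -/
/- ------------------------------------------------------------------ -/

section Aux
set_option linter.unusedSectionVars false

variable {L d : ℕ} [NeZero L] {F : Type*} [Fintype F] [DecidableEq F]

/-- A fermionic mode: a site together with a spin. -/
abbrev Mode (L d : ℕ) := Site L d × Bool

/-- The annihilation operator of a mode. -/
noncomputable def op (a : Site L d → Bool → Matrix F F ℂ) (p : Mode L d) : Matrix F F ℂ :=
  a p.1 p.2

variable {a : Site L d → Bool → Matrix F F ℂ}

lemma car_aa (h : CAR a) (p q : Mode L d) :
    op a p * op a q + op a q * op a p = 0 := h.2 p.1 q.1 p.2 q.2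

lemma car_swap (h : CAR a) (p q : Mode L d) :
    op a p * op a q = -(op a q * op a p) :=
  eq_neg_of_add_eq_zero_left (car_aa h p q)

lemma car_sq (h : CAR a) (p : Mode L d) : op a p * op a p = 0 := by
  have h1 := car_aa h p p
  have h2 : (2 : ℂ) • (op a p * op a p) = 0 := by
    rw [two_smul]; exact h1
  have := smul_eq_zero.mp h2
  rcases this with h3 | h3
  · exact absurd h3 two_ne_zero
  · exact h3

lemma car_sq_adj (h : CAR a) (p : Mode L d) : (op a p)ᴴ * (op a p)ᴴ = 0 := by
  have := congrArg Matrix.conjTranspose (car_sq h p)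
  simpa [Matrix.conjTranspose_mul] using this

lemma car_swap_hh (h : CAR a) (p q : Mode L d) :
    (op a p)ᴴ * (op a q)ᴴ = -((op a q)ᴴ * (op a p)ᴴ) := by
  have h0 : (op a p)ᴴ * (op a q)ᴴ + (op a q)ᴴ * (op a p)ᴴ = 0 := by
    have := congrArg Matrix.conjTranspose (car_aa h q p)
    simpa [Matrix.conjTranspose_mul, add_comm] using this
  exact eq_neg_of_add_eq_zero_left h0

lemma car_mixed (h : CAR a) (p : Mode L d) :
    op a p * (op a p)ᴴ + (op a p)ᴴ * op a p = 1 := by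
  have := h.1 p.1 p.1 p.2 p.2
  simpa [op] using this

lemma car_mixed_ne (h : CAR a) {p q : Mode L d} (hpq : p ≠ q) :
    op a p * (op a q)ᴴ = -((op a q)ᴴ * op a p) := by
  have h1 := h.1 p.1 q.1 p.2 q.2
  rw [if_neg (fun hc => hpq (Prod.ext hc.1 hc.2))] at h1
  exact eq_neg_of_add_eq_zero_left h1

/-- `a aᴴ = 1 - aᴴ a` for a single mode. -/
lemma car_aah (h : CAR a) (p : Mode L d) :
    op a p * (op a p)ᴴ = 1 - (op a p)ᴴ * op a p :=
  eq_sub_of_add_eq (car_mixed h p)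

/-- Number operator of a mode. -/
noncomputable def nop (a : Site L d → Bool → Matrix F F ℂ) (p : Mode L d) : Matrix F F ℂ :=
  (a p.1 p.2)ᴴ * a p.1 p.2

lemma nop_eq (p : Mode L d) : nop a p = (op a p)ᴴ * op a p := rfl

lemma nop_herm (p : Mode L d) : (nop a p)ᴴ = nop a p := by
  simp [nop, Matrix.conjTranspose_mul]

lemma n_mul_a_same (h : CAR a) (p : Mode L d) : nop a p * op a p = 0 := by
  rw [nop_eq, mul_assoc, car_sq h, mul_zero]

lemma a_mul_n_same (h : CAR a) (p : Mode L d) : op a p * nop a p = op a p := by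
  rw [nop_eq, ← mul_assoc, car_aah h, sub_mul, one_mul, mul_assoc, car_sq h,
    mul_zero, sub_zero]

lemma n_mul_ah_same (h : CAR a) (p : Mode L d) :
    nop a p * (op a p)ᴴ = (op a p)ᴴ := by
  have := congrArg Matrix.conjTranspose (a_mul_n_same h p)
  simpa [Matrix.conjTranspose_mul, nop_herm] using this

lemma ah_mul_n_same (h : CAR a) (p : Mode L d) : (op a p)ᴴ * nop a p = 0 := by
  have := congrArg Matrix.conjTranspose (n_mul_a_same h p)
  simpa [Matrix.conjTranspose_mul, nop_herm] using this

lemma n_sq (h : CAR a) (p : Mode L d) : nop a p * nop a p = nop a p := by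
  rw [nop_eq, ← mul_assoc, mul_assoc ((op a p)ᴴ) (op a p) ((op a p)ᴴ),
    car_aah h, mul_sub, mul_one, sub_mul,
    ← mul_assoc ((op a p)ᴴ) ((op a p)ᴴ) (op a p), car_sq_adj h]
  rw [zero_mul, zero_mul, sub_zero]

lemma n_comm_ne (h : CAR a) {q p : Mode L d} (hqp : q ≠ p) :
    nop a q * op a p = op a p * nop a q := by
  have h1 : op a q * op a p = -(op a p * op a q) := car_swap h q p
  have h2 : op a p * (op a q)ᴴ = -((op a q)ᴴ * op a p) := car_mixed_ne h (Ne.symm hqp)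
  have h2' : (op a q)ᴴ * op a p = -(op a p * (op a q)ᴴ) := by
    rw [h2, neg_neg]
  rw [nop_eq, mul_assoc, h1, mul_neg, ← mul_assoc, h2', neg_mul, neg_neg,
    mul_assoc]

lemma n_comm_ah_ne (h : CAR a) {q p : Mode L d} (hqp : q ≠ p) :
    nop a q * (op a p)ᴴ = (op a p)ᴴ * nop a q := by
  have := congrArg Matrix.conjTranspose (n_comm_ne h hqp)
  simp only [Matrix.conjTranspose_mul, nop_herm] at this
  exact this.symm

/-- General commutation of a number operator past an annihilator. -/
lemma n_mul_a (h : CAR a) (q p : Mode L d) :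
    nop a q * op a p = op a p * nop a q - (if q = p then (1:ℂ) else 0) • op a p := by
  by_cases hqp : q = p
  · subst hqp
    rw [n_mul_a_same h, a_mul_n_same h, if_pos rfl, one_smul, sub_self]
  · rw [n_comm_ne h hqp, if_neg hqp, zero_smul, sub_zero]

/-- The factor `1 - 2 n_p`. -/
noncomputable def Dop (a : Site L d → Bool → Matrix F F ℂ) (p : Mode L d) : Matrix F F ℂ :=
  (1 : Matrix F F ℂ) - (2 : ℂ) • ((a p.1 p.2)ᴴ * a p.1 p.2)

lemma Dop_eq (p : Mode L d) : Dop a p = 1 - (2:ℂ) • nop a p := rfl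

lemma Dop_herm (p : Mode L d) : (Dop a p)ᴴ = Dop a p := by
  simp [Dop_eq, Matrix.conjTranspose_smul, nop_herm]

lemma D_mul_a (h : CAR a) (q p : Mode L d) :
    Dop a q * op a p = (if q = p then (-1:ℂ) else 1) • (op a p * Dop a q) := by
  by_cases hqp : q = p
  · subst hqp
    rw [if_pos rfl, Dop_eq, sub_mul, one_mul, smul_mul_assoc, n_mul_a_same h,
      mul_sub, mul_one, mul_smul_comm, a_mul_n_same h]
    simp [smul_smul]
    module
  · rw [if_neg hqp, one_smul, Dop_eq, sub_mul, one_mul, mul_sub, mul_one,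
      smul_mul_assoc, mul_smul_comm, n_comm_ne h hqp]

lemma D_mul_ah (h : CAR a) (q p : Mode L d) :
    Dop a q * (op a p)ᴴ = (if q = p then (-1:ℂ) else 1) • ((op a p)ᴴ * Dop a q) := by
  by_cases hqp : q = p
  · subst hqp
    rw [if_pos rfl, Dop_eq, sub_mul, one_mul, smul_mul_assoc, n_mul_ah_same h,
      mul_sub, mul_one, mul_smul_comm, ah_mul_n_same h]
    simp [smul_smul]
    module
  · rw [if_neg hqp, one_smul, Dop_eq, sub_mul, one_mul, mul_sub, mul_one,
      smul_mul_assoc, mul_smul_comm, n_comm_ah_ne h hqp]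

lemma D_sq (h : CAR a) (q : Mode L d) : Dop a q * Dop a q = 1 := by
  rw [Dop_eq, sub_mul, one_mul, mul_sub, mul_one, smul_mul_assoc,
    mul_smul_comm, smul_smul, n_sq h]
  module

lemma D_comm_n (h : CAR a) (q p : Mode L d) :
    Dop a q * nop a p = nop a p * Dop a q := by
  have h1 := D_mul_ah h q p
  have h2 := D_mul_a h q p
  rw [nop_eq, ← mul_assoc, h1, smul_mul_assoc, mul_assoc, h2, mul_smul_comm,
    smul_smul, ← mul_assoc]
  by_cases hqp : q = p <;> simp [hqp]

lemma D_comm_D (h : CAR a) (q p : Mode L d) :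
    Dop a q * Dop a p = Dop a p * Dop a q := by
  rw [Dop_eq p, mul_sub, sub_mul, mul_one, one_mul, mul_smul_comm,
    smul_mul_assoc, D_comm_n h]

/-- Product of `Dop` factors along a list of modes. -/
noncomputable def Sprod (a : Site L d → Bool → Matrix F F ℂ) (ℓ : List (Mode L d)) :
    Matrix F F ℂ :=
  (ℓ.map (Dop a)).prod

lemma Sprod_nil : Sprod a ([] : List (Mode L d)) = 1 := rfl

lemma Sprod_cons (q : Mode L d) (t : List (Mode L d)) :
    Sprod a (q :: t) = Dop a q * Sprod a t := by
  simp [Sprod]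

/-- Number of occurrences of a mode in a list (avoiding `BEq` issues). -/
def mcount (p : Mode L d) : List (Mode L d) → ℕ
  | [] => 0
  | q :: t => (if q = p then 1 else 0) + mcount p t

lemma mcount_eq_zero {p : Mode L d} : ∀ {ℓ : List (Mode L d)}, p ∉ ℓ → mcount p ℓ = 0
  | [], _ => rfl
  | q :: t, hp => by
    have hqp : q ≠ p := fun hc => hp (hc ▸ (List.mem_cons_self : q ∈ q :: t))
    have hpt : p ∉ t := fun hc => hp (List.mem_cons_of_mem q hc)
    simp [mcount, hqp, mcount_eq_zero hpt]

lemma mcount_nodup_mem {p : Mode L d} :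
    ∀ {ℓ : List (Mode L d)}, ℓ.Nodup → p ∈ ℓ → mcount p ℓ = 1
  | [], _, hp => by simp at hp
  | q :: t, hn, hp => by
    rcases List.mem_cons.mp hp with hq | ht
    · subst hq
      have : p ∉ t := (List.nodup_cons.mp hn).1
      simp [mcount, mcount_eq_zero this]
    · have hqp : q ≠ p := by
        rintro rfl
        exact (List.nodup_cons.mp hn).1 ht
      simp [mcount, hqp, mcount_nodup_mem (List.nodup_cons.mp hn).2 ht]

/-- Commuting a matrix `b` past an `Sprod`, picking up one sign per `Dop` factor
that "sees" it. -/
lemma Sprod_comm_gen (ℓ : List (Mode L d)) (b : Matrix F F ℂ) (p : Mode L d)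
    (hb : ∀ q, Dop a q * b = (if q = p then (-1:ℂ) else 1) • (b * Dop a q)) :
    Sprod a ℓ * b = ((-1:ℂ) ^ (mcount p ℓ)) • (b * Sprod a ℓ) := by
  induction ℓ with
  | nil => simp [Sprod_nil, mcount]
  | cons q t ih =>
    rw [Sprod_cons, mul_assoc, ih, mul_smul_comm, ← mul_assoc, hb q,
      smul_mul_assoc, smul_smul, mul_assoc]
    congr 1
    by_cases hpq : q = p
    · simp only [mcount, if_pos hpq, pow_add, pow_one]
      ring
    · simp only [mcount, if_neg hpq, zero_add]
      ring

lemma Sprod_mul_a (h : CAR a) (ℓ : List (Mode L d)) (p : Mode L d) :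
    Sprod a ℓ * op a p = ((-1:ℂ) ^ (mcount p ℓ)) • (op a p * Sprod a ℓ) :=
  Sprod_comm_gen ℓ (op a p) p (fun q => D_mul_a h q p)

lemma Sprod_mul_ah (h : CAR a) (ℓ : List (Mode L d)) (p : Mode L d) :
    Sprod a ℓ * (op a p)ᴴ = ((-1:ℂ) ^ (mcount p ℓ)) • ((op a p)ᴴ * Sprod a ℓ) :=
  Sprod_comm_gen ℓ ((op a p)ᴴ) p (fun q => D_mul_ah h q p)

lemma Sprod_comm_D (h : CAR a) (ℓ : List (Mode L d)) (q : Mode L d) :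
    Sprod a ℓ * Dop a q = Dop a q * Sprod a ℓ := by
  induction ℓ with
  | nil => simp [Sprod_nil]
  | cons r t ih =>
    rw [Sprod_cons, mul_assoc, ih, ← mul_assoc, D_comm_D h r q, mul_assoc]

lemma Sprod_sq (h : CAR a) (ℓ : List (Mode L d)) :
    Sprod a ℓ * Sprod a ℓ = 1 := by
  induction ℓ with
  | nil => simp [Sprod_nil]
  | cons q t ih =>
    rw [Sprod_cons]
    calc Dop a q * Sprod a t * (Dop a q * Sprod a t)
        = Dop a q * (Sprod a t * Dop a q) * Sprod a t := by
          simp only [mul_assoc]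
      _ = Dop a q * (Dop a q * Sprod a t) * Sprod a t := by rw [Sprod_comm_D h]
      _ = (Dop a q * Dop a q) * (Sprod a t * Sprod a t) := by simp only [mul_assoc]
      _ = 1 := by rw [D_sq h, ih, one_mul]

lemma Sprod_herm (h : CAR a) (ℓ : List (Mode L d)) :
    (Sprod a ℓ)ᴴ = Sprod a ℓ := by
  induction ℓ with
  | nil => simp [Sprod_nil]
  | cons q t ih =>
    rw [Sprod_cons, Matrix.conjTranspose_mul, ih, Dop_herm, Sprod_comm_D h]

/-- The list of all modes different from `q`. -/
noncomputable def lS (q : Mode L d) : List (Mode L d) :=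
  ((Finset.univ : Finset (Mode L d)).filter (fun p => p ≠ q)).toList

lemma count_lS_self (q : Mode L d) : mcount q (lS q) = 0 := by
  have hq : q ∉ lS q := by
    intro hm
    have := Finset.mem_toList.mp hm
    simp at this
  exact mcount_eq_zero hq

lemma count_lS_ne {p q : Mode L d} (hpq : p ≠ q) : mcount p (lS q) = 1 := by
  have hmem : p ∈ lS q := Finset.mem_toList.mpr (by simp [hpq])
  exact mcount_nodup_mem (Finset.nodup_toList _) hmem

/-- The "Majorana" operator `aᴴ + a` of a mode. -/
noncomputable def cop (a : Site L d → Bool → Matrix F F ℂ) (q : Mode L d) :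
    Matrix F F ℂ :=
  (op a q)ᴴ + op a q

lemma cop_herm (q : Mode L d) : (cop a q)ᴴ = cop a q := by
  simp [cop, add_comm]

lemma cop_sq (h : CAR a) (q : Mode L d) : cop a q * cop a q = 1 := by
  rw [cop, add_mul, mul_add, mul_add, car_sq h, car_sq_adj h, add_zero,
    zero_add, add_comm, car_mixed h]

lemma cop_conj_a_self (h : CAR a) (q : Mode L d) :
    cop a q * op a q * cop a q = (op a q)ᴴ := by
  rw [cop, add_mul, car_sq h, add_zero, ← nop_eq, mul_add, n_mul_ah_same h,
    n_mul_a_same h, add_zero]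

lemma cop_conj_ah_self (h : CAR a) (q : Mode L d) :
    cop a q * (op a q)ᴴ * cop a q = op a q := by
  rw [cop, add_mul, car_sq_adj h, zero_add, car_aah h, sub_mul, one_mul,
    mul_add, ← nop_eq, n_mul_ah_same h, n_mul_a_same h, add_zero, add_sub_cancel_left]

lemma cop_anticomm_a (h : CAR a) {q p : Mode L d} (hpq : p ≠ q) :
    cop a q * op a p = -(op a p * cop a q) := by
  have h1 : (op a q)ᴴ * op a p = -(op a p * (op a q)ᴴ) := by
    rw [car_mixed_ne h hpq, neg_neg]
  have h2 : op a q * op a p = -(op a p * op a q) := car_swap h q p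
  rw [cop, add_mul, h1, h2, mul_add, neg_add]

lemma cop_anticomm_ah (h : CAR a) {q p : Mode L d} (hpq : p ≠ q) :
    cop a q * (op a p)ᴴ = -((op a p)ᴴ * cop a q) := by
  have h1 : (op a q)ᴴ * (op a p)ᴴ = -((op a p)ᴴ * (op a q)ᴴ) := car_swap_hh h q p
  have h2 : op a q * (op a p)ᴴ = -((op a p)ᴴ * op a q) := car_mixed_ne h (Ne.symm hpq)
  rw [cop, add_mul, h1, h2, mul_add, neg_add]

lemma Sprod_comm_cop (h : CAR a) (q : Mode L d) :
    Sprod a (lS q) * cop a q = cop a q * Sprod a (lS q) := by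
  rw [cop, mul_add, add_mul, Sprod_mul_a h, Sprod_mul_ah h, count_lS_self]
  simp

lemma klein_eq (q : Mode L d) :
    klein L d a q.1 q.2 = Sprod a (lS q) * cop a q := rfl

lemma klein_herm (h : CAR a) (q : Mode L d) :
    (klein L d a q.1 q.2)ᴴ = klein L d a q.1 q.2 := by
  rw [klein_eq, Matrix.conjTranspose_mul, cop_herm, Sprod_herm h,
    Sprod_comm_cop h]

lemma klein_sq (h : CAR a) (q : Mode L d) :
    klein L d a q.1 q.2 * klein L d a q.1 q.2 = 1 := by
  rw [klein_eq]
  calc Sprod a (lS q) * cop a q * (Sprod a (lS q) * cop a q)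
      = Sprod a (lS q) * (cop a q * Sprod a (lS q)) * cop a q := by
        simp only [mul_assoc]
    _ = Sprod a (lS q) * (Sprod a (lS q) * cop a q) * cop a q := by
        rw [Sprod_comm_cop h]
    _ = (Sprod a (lS q) * Sprod a (lS q)) * (cop a q * cop a q) := by
        simp only [mul_assoc]
    _ = 1 := by rw [Sprod_sq h, cop_sq h, one_mul]

lemma klein_conj_a (h : CAR a) (q p : Mode L d) :
    klein L d a q.1 q.2 * op a p * klein L d a q.1 q.2
      = if p = q then (op a p)ᴴ else op a p := by
  rw [klein_eq]
  by_cases hpq : p = q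
  · subst hpq
    rw [if_pos rfl]
    have hS : Sprod a (lS p) * op a p = op a p * Sprod a (lS p) := by
      rw [Sprod_mul_a h, count_lS_self]; simp
    calc Sprod a (lS p) * cop a p * op a p * (Sprod a (lS p) * cop a p)
        = Sprod a (lS p) * (cop a p * op a p * Sprod a (lS p)) * cop a p := by
          simp only [mul_assoc]
      _ = Sprod a (lS p) * (cop a p * (op a p * Sprod a (lS p))) * cop a p := by
          simp only [mul_assoc]
      _ = Sprod a (lS p) * (cop a p * (Sprod a (lS p) * op a p)) * cop a p := by
          rw [hS]
      _ = Sprod a (lS p) * (cop a p * Sprod a (lS p)) * (op a p * cop a p) := by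
          simp only [mul_assoc]
      _ = Sprod a (lS p) * (Sprod a (lS p) * cop a p) * (op a p * cop a p) := by
          rw [Sprod_comm_cop h]
      _ = (Sprod a (lS p) * Sprod a (lS p)) * (cop a p * op a p * cop a p) := by
          simp only [mul_assoc]
      _ = (op a p)ᴴ := by rw [Sprod_sq h, cop_conj_a_self h, one_mul]
  · rw [if_neg hpq]
    have hS : Sprod a (lS q) * op a p = -(op a p * Sprod a (lS q)) := by
      rw [Sprod_mul_a h, count_lS_ne hpq]; simp
    have hc : cop a q * op a p = -(op a p * cop a q) := cop_anticomm_a h hpq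
    calc Sprod a (lS q) * cop a q * op a p * (Sprod a (lS q) * cop a q)
        = Sprod a (lS q) * (cop a q * op a p) * (Sprod a (lS q) * cop a q) := by
          simp only [mul_assoc]
      _ = -(Sprod a (lS q) * (op a p * cop a q) * (Sprod a (lS q) * cop a q)) := by
          rw [hc]; simp
      _ = -((Sprod a (lS q) * op a p) * (cop a q * Sprod a (lS q)) * cop a q) := by
          simp only [mul_assoc]
      _ = -((-(op a p * Sprod a (lS q))) * (Sprod a (lS q) * cop a q) * cop a q) := by
          rw [hS, Sprod_comm_cop h]
      _ = op a p * ((Sprod a (lS q) * Sprod a (lS q)) * (cop a q * cop a q)) := by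
          simp only [neg_mul, neg_neg, mul_assoc]
      _ = op a p := by rw [Sprod_sq h, cop_sq h, one_mul, mul_one]

lemma klein_conj_ah (h : CAR a) (q p : Mode L d) :
    klein L d a q.1 q.2 * (op a p)ᴴ * klein L d a q.1 q.2
      = if p = q then op a p else (op a p)ᴴ := by
  have := congrArg Matrix.conjTranspose (klein_conj_a h q p)
  rw [Matrix.conjTranspose_mul, Matrix.conjTranspose_mul, klein_herm h,
    apply_ite Matrix.conjTranspose, Matrix.conjTranspose_conjTranspose] at this
  rw [← mul_assoc] at this
  exact this

/-- Ordered product of Klein operators along a list of modes. -/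
noncomputable def Kprod (a : Site L d → Bool → Matrix F F ℂ)
    (ℓ : List (Mode L d)) : Matrix F F ℂ :=
  (ℓ.map (fun p => klein L d a p.1 p.2)).prod

lemma Kprod_nil : Kprod a ([] : List (Mode L d)) = 1 := rfl

lemma Kprod_cons (q : Mode L d) (t : List (Mode L d)) :
    Kprod a (q :: t) = klein L d a q.1 q.2 * Kprod a t := by
  simp [Kprod]

lemma Kprod_unitary (h : CAR a) (ℓ : List (Mode L d)) :
    (Kprod a ℓ)ᴴ * Kprod a ℓ = 1 ∧ Kprod a ℓ * (Kprod a ℓ)ᴴ = 1 := by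
  induction ℓ with
  | nil => simp [Kprod_nil]
  | cons q t ih =>
    have hk := klein_herm h q
    have hk2 := klein_sq h q
    constructor
    · rw [Kprod_cons, Matrix.conjTranspose_mul, hk]
      calc (Kprod a t)ᴴ * klein L d a q.1 q.2 * (klein L d a q.1 q.2 * Kprod a t)
          = (Kprod a t)ᴴ * (klein L d a q.1 q.2 * klein L d a q.1 q.2) * Kprod a t := by
            simp only [mul_assoc]
        _ = 1 := by rw [hk2, mul_one, ih.1]
    · rw [Kprod_cons, Matrix.conjTranspose_mul, hk]
      calc klein L d a q.1 q.2 * Kprod a t * ((Kprod a t)ᴴ * klein L d a q.1 q.2)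
          = klein L d a q.1 q.2 * (Kprod a t * (Kprod a t)ᴴ) * klein L d a q.1 q.2 := by
            simp only [mul_assoc]
        _ = 1 := by rw [ih.2, mul_one, hk2]

lemma Kprod_conj (h : CAR a) (ℓ : List (Mode L d)) (p : Mode L d) :
    ((Kprod a ℓ)ᴴ * op a p * Kprod a ℓ
        = if Even (mcount p ℓ) then op a p else (op a p)ᴴ)
      ∧ ((Kprod a ℓ)ᴴ * (op a p)ᴴ * Kprod a ℓ
        = if Even (mcount p ℓ) then (op a p)ᴴ else op a p) := by
  induction ℓ with
  | nil => simp [Kprod_nil, mcount]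
  | cons q t ih =>
    have hk := klein_herm h q
    have step : ∀ b : Matrix F F ℂ,
        (Kprod a (q :: t))ᴴ * b * Kprod a (q :: t)
          = (Kprod a t)ᴴ * (klein L d a q.1 q.2 * b * klein L d a q.1 q.2) * Kprod a t := by
      intro b
      rw [Kprod_cons, Matrix.conjTranspose_mul, hk]
      simp only [mul_assoc]
    have hparity : Even (mcount p (q :: t))
        ↔ ((q = p ∧ ¬ Even (mcount p t)) ∨ (q ≠ p ∧ Even (mcount p t))) := by
      by_cases hqp : q = p
      · simp [mcount, hqp, Nat.even_add_one, parity_simps]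
      · simp [mcount, hqp]
    by_cases hqp : q = p
    · subst hqp
      have hflip : Even (mcount q (q :: t)) ↔ ¬ Even (mcount q t) := by
        simp [mcount, Nat.even_add]
      constructor
      · rw [step, klein_conj_a h q q, if_pos rfl, ih.2]
        by_cases he : Even (mcount q t)
        · rw [if_pos he, if_neg (fun hc => (hflip.mp hc) he)]
        · rw [if_neg he, if_pos (hflip.mpr he)]
      · rw [step, klein_conj_ah h q q, if_pos rfl, ih.1]
        by_cases he : Even (mcount q t)
        · rw [if_pos he, if_neg (fun hc => (hflip.mp hc) he)]
        · rw [if_neg he, if_pos (hflip.mpr he)]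
    · have hmc : mcount p (q :: t) = mcount p t := by simp [mcount, hqp]
      constructor
      · rw [step, klein_conj_a h q p, if_neg (fun hc => hqp hc.symm), ih.1, hmc]
      · rw [step, klein_conj_ah h q p, if_neg (fun hc => hqp hc.symm), ih.2, hmc]

/-- The list of odd modes. -/
noncomputable def lOdd (L d : ℕ) [NeZero L] : List (Mode L d) :=
  ((Finset.univ : Finset (Mode L d)).filter
    (fun p => Odd (coordSum L d p.1))).toList

lemma Uodd_eq : Uodd L d a = Kprod a (lOdd L d) := rfl

lemma mcount_lOdd (p : Mode L d) :
    mcount p (lOdd L d) = if Odd (coordSum L d p.1) then 1 else 0 := by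
  by_cases hodd : Odd (coordSum L d p.1)
  · rw [if_pos hodd]
    exact mcount_nodup_mem (Finset.nodup_toList _)
      (Finset.mem_toList.mpr (by simp [hodd]))
  · rw [if_neg hodd]
    refine mcount_eq_zero ?_
    intro hm
    have := Finset.mem_toList.mp hm
    simp [hodd] at this

lemma Uodd_unitary_left (h : CAR a) : (Uodd L d a)ᴴ * Uodd L d a = 1 := by
  rw [Uodd_eq]; exact (Kprod_unitary h _).1

lemma Uodd_unitary_right (h : CAR a) : Uodd L d a * (Uodd L d a)ᴴ = 1 := by
  rw [Uodd_eq]; exact (Kprod_unitary h _).2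

lemma Uodd_conj_a (h : CAR a) (p : Mode L d) :
    (Uodd L d a)ᴴ * op a p * Uodd L d a
      = if Odd (coordSum L d p.1) then (op a p)ᴴ else op a p := by
  rw [Uodd_eq, (Kprod_conj h (lOdd L d) p).1, mcount_lOdd]
  by_cases hodd : Odd (coordSum L d p.1) <;> simp [hodd]

lemma Uodd_conj_ah (h : CAR a) (p : Mode L d) :
    (Uodd L d a)ᴴ * (op a p)ᴴ * Uodd L d a
      = if Odd (coordSum L d p.1) then op a p else (op a p)ᴴ := by
  rw [Uodd_eq, (Kprod_conj h (lOdd L d) p).2, mcount_lOdd]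
  by_cases hodd : Odd (coordSum L d p.1) <;> simp [hodd]

/-- The exponent sum appearing in `U1`. -/
noncomputable def Nsum (L d : ℕ) [NeZero L] {F : Type*} [Fintype F] [DecidableEq F]
    (a : Site L d → Bool → Matrix F F ℂ) : Matrix F F ℂ :=
  ∑ σ : Bool,
    ∑ j ∈ Finset.univ.filter (fun j : Fin d => j.val ≠ 0),
      ∑ x ∈ Finset.univ.filter (fun x : Site L d => Even (coordVal L (x j))),
        (a x σ)ᴴ * a x σ

lemma U1_eq : U1 L d a = NormedSpace.exp (((Real.pi : ℂ) / 2 * I) • Nsum L d a) := rfl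

/-- The number of relevant directions (`j ≥ 2` with even `j`-th coordinate) at a site. -/
def mm (L d : ℕ) [NeZero L] (x : Site L d) : ℕ :=
  (Finset.univ.filter (fun j : Fin d => j.val ≠ 0 ∧ Even (coordVal L (x j)))).card

lemma Nsum_herm : (Nsum L d a)ᴴ = Nsum L d a := by
  unfold Nsum
  rw [Matrix.conjTranspose_sum]
  refine Finset.sum_congr rfl fun σ _ => ?_
  rw [Matrix.conjTranspose_sum]
  refine Finset.sum_congr rfl fun j _ => ?_
  rw [Matrix.conjTranspose_sum]
  refine Finset.sum_congr rfl fun x _ => ?_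
  rw [Matrix.conjTranspose_mul, Matrix.conjTranspose_conjTranspose]

lemma scalar_sum (p : Mode L d) :
    (∑ σ : Bool, ∑ j ∈ Finset.univ.filter (fun j : Fin d => j.val ≠ 0),
      ∑ x ∈ Finset.univ.filter (fun x : Site L d => Even (coordVal L (x j))),
      (if (x, σ) = p then (1:ℂ) else 0)) = (mm L d p.1 : ℂ) := by
  have hsplit : ∀ (σ : Bool) (x : Site L d),
      (if (x, σ) = p then (1:ℂ) else 0)
        = (if x = p.1 then (1:ℂ) else 0) * (if σ = p.2 then (1:ℂ) else 0) := by
    intro σ x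
    by_cases hx : x = p.1 <;> by_cases hs : σ = p.2 <;>
      simp [Prod.ext_iff, hx, hs]
  simp only [hsplit]
  simp only [← Finset.sum_mul]
  simp only [Finset.sum_ite_eq' _ p.1 (fun _ => (1:ℂ))]
  simp only [Finset.mem_filter, Finset.mem_univ, true_and]
  simp only [← Finset.sum_mul, ← Finset.mul_sum]
  rw [Finset.sum_ite_eq' Finset.univ p.2 (fun _ => (1:ℂ))]
  simp only [Finset.mem_univ, if_pos, mul_one]
  rw [Finset.sum_boole]
  rw [Finset.filter_filter]
  rfl

lemma Nsum_mul_a (h : CAR a) (p : Mode L d) :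
    Nsum L d a * op a p
      = op a p * Nsum L d a - (mm L d p.1 : ℂ) • op a p := by
  have key : ∀ (x : Site L d) (σ : Bool),
      ((a x σ)ᴴ * a x σ) * op a p
        = op a p * ((a x σ)ᴴ * a x σ)
            - (if (x, σ) = p then (1:ℂ) else 0) • op a p := by
    intro x σ
    exact n_mul_a h (x, σ) p
  unfold Nsum
  simp only [Finset.sum_mul, key, Finset.sum_sub_distrib]
  congr 1
  · simp only [← Finset.mul_sum]
  · simp only [← Finset.sum_smul]
    rw [scalar_sum p]

section Exp

attribute [local instance] Matrix.linftyOpNormedRing Matrix.linftyOpNormedAlgebra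

/-- If `A B = B (A + z 1)` then `exp A` commutes with `B` up to the factor `e^z`. -/
lemma exp_comm_shift (A B : Matrix F F ℂ) (z : ℂ)
    (hc : A * B = B * (A + z • 1)) :
    NormedSpace.exp A * B = Complex.exp z • (B * NormedSpace.exp A) := by
  have hpow : ∀ n : ℕ, A ^ n * B = B * (A + z • 1) ^ n := by
    intro n
    induction n with
    | zero => simp
    | succ n ih =>
      rw [pow_succ, pow_succ, mul_assoc, hc, ← mul_assoc, ih, mul_assoc]
  have hsumA : Summable (fun n : ℕ => ((n.factorial : ℂ))⁻¹ • A ^ n) :=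
    NormedSpace.expSeries_summable' A
  have hsumA' : Summable (fun n : ℕ => ((n.factorial : ℂ))⁻¹ • (A + z • 1) ^ n) :=
    NormedSpace.expSeries_summable' (A + z • 1)
  have step1 : NormedSpace.exp A * B = B * NormedSpace.exp (A + z • 1) := by
    simp only [NormedSpace.exp_eq_tsum ℂ]
    rw [← hsumA.tsum_mul_right B]
    rw [← hsumA'.tsum_mul_left B]
    refine tsum_congr fun n => ?_
    rw [smul_mul_assoc, hpow n, mul_smul_comm]
  rw [step1]
  have hcomm : Commute A (z • (1 : Matrix F F ℂ)) := by
    unfold Commute SemiconjBy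
    simp [mul_smul_comm, smul_mul_assoc]
  have : NormedSpace.exp (A + z • 1)
      = NormedSpace.exp (z • (1 : Matrix F F ℂ)) * NormedSpace.exp A := by
    rw [add_comm]
    exact NormedSpace.exp_add_of_commute hcomm.symm
  rw [this]
  have hz : NormedSpace.exp (z • (1 : Matrix F F ℂ)) = Complex.exp z • 1 := by
    have h1 : z • (1 : Matrix F F ℂ) = algebraMap ℂ (Matrix F F ℂ) z :=
      (Algebra.algebraMap_eq_smul_one z).symm
    rw [h1]
    refine (NormedSpace.map_exp (algebraMap ℂ (Matrix F F ℂ))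
      (continuous_algebraMap ℂ (Matrix F F ℂ)) z).symm.trans ?_
    rw [← Complex.exp_eq_exp_ℂ]
    exact Algebra.algebraMap_eq_smul_one _
  rw [hz, smul_mul_assoc, one_mul, mul_smul_comm]

lemma exp_neg_mul_exp (A : Matrix F F ℂ) :
    NormedSpace.exp (-A) * NormedSpace.exp A = 1 := by
  have := NormedSpace.exp_add_of_commute (Commute.refl A).neg_left
  rw [neg_add_cancel, NormedSpace.exp_zero] at this
  exact this.symm

lemma exp_mul_exp_neg (A : Matrix F F ℂ) :
    NormedSpace.exp A * NormedSpace.exp (-A) = 1 := by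
  have := NormedSpace.exp_add_of_commute (Commute.refl A).neg_right
  rw [add_neg_cancel, NormedSpace.exp_zero] at this
  exact this.symm

end Exp

lemma exp_I_pi_div_two : Complex.exp ((Real.pi : ℂ) / 2 * I) = I := by
  rw [Complex.exp_mul_I]
  have h2 : ((Real.pi : ℂ) / 2) = ((Real.pi / 2 : ℝ) : ℂ) := by push_cast; ring
  rw [h2, ← Complex.ofReal_cos, ← Complex.ofReal_sin,
    Real.cos_pi_div_two, Real.sin_pi_div_two]
  simp

/-- The phase picked up by an annihilation operator under conjugation with `U1`. -/
lemma U1_conj_a (h : CAR a) (p : Mode L d) :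
    (U1 L d a)ᴴ * op a p * U1 L d a = (I ^ (mm L d p.1)) • op a p := by
  set c : ℂ := (Real.pi : ℂ) / 2 * I with hc
  set A : Matrix F F ℂ := c • Nsum L d a with hA
  have hAherm : Aᴴ = -A := by
    rw [hA, Matrix.conjTranspose_smul, Nsum_herm]
    have : star c = -c := by
      rw [hc]
      simp [Complex.ext_iff]
    rw [this, neg_smul]
  have hU1herm : (U1 L d a)ᴴ = NormedSpace.exp (-A) := by
    rw [U1_eq, ← Matrix.exp_conjTranspose, hAherm]
  have hshift : (-A) * op a p = op a p * ((-A) + (c * (mm L d p.1)) • 1) := by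
    have h1 := Nsum_mul_a h p
    have : A * op a p = op a p * A - (c * (mm L d p.1)) • op a p := by
      rw [hA, smul_mul_assoc, h1, mul_smul_comm, smul_sub, smul_smul]
    rw [neg_mul, this, mul_add]
    simp only [mul_neg, mul_smul_comm, mul_one]
    abel
  have hmain := exp_comm_shift (-A) (op a p) (c * (mm L d p.1)) hshift
  have hfinal : (U1 L d a)ᴴ * op a p * U1 L d a
      = Complex.exp (c * (mm L d p.1)) • op a p := by
    rw [hU1herm, U1_eq, ← hA, mul_assoc, ← mul_assoc (NormedSpace.exp (-A)),
      hmain, smul_mul_assoc, mul_assoc (op a p), exp_neg_mul_exp, mul_one]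
  rw [hfinal]
  congr 1
  rw [mul_comm, Complex.exp_nat_mul, exp_I_pi_div_two]

lemma U1_unitary_left (h : CAR a) : (U1 L d a)ᴴ * U1 L d a = 1 := by
  set c : ℂ := (Real.pi : ℂ) / 2 * I with hc
  set A : Matrix F F ℂ := c • Nsum L d a with hA
  have hAherm : Aᴴ = -A := by
    rw [hA, Matrix.conjTranspose_smul, Nsum_herm]
    have : star c = -c := by rw [hc]; simp [Complex.ext_iff]
    rw [this, neg_smul]
  have hU1herm : (U1 L d a)ᴴ = NormedSpace.exp (-A) := by
    rw [U1_eq, ← Matrix.exp_conjTranspose, hAherm]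
  rw [hU1herm, U1_eq, ← hA, exp_neg_mul_exp]

lemma U1_unitary_right (h : CAR a) : U1 L d a * (U1 L d a)ᴴ = 1 := by
  set c : ℂ := (Real.pi : ℂ) / 2 * I with hc
  set A : Matrix F F ℂ := c • Nsum L d a with hA
  have hAherm : Aᴴ = -A := by
    rw [hA, Matrix.conjTranspose_smul, Nsum_herm]
    have : star c = -c := by rw [hc]; simp [Complex.ext_iff]
    rw [this, neg_smul]
  have hU1herm : (U1 L d a)ᴴ = NormedSpace.exp (-A) := by
    rw [U1_eq, ← Matrix.exp_conjTranspose, hAherm]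
  rw [hU1herm, U1_eq, ← hA, exp_mul_exp_neg]

lemma U1_conj_ah (h : CAR a) (p : Mode L d) :
    (U1 L d a)ᴴ * (op a p)ᴴ * U1 L d a = ((-I) ^ (mm L d p.1)) • (op a p)ᴴ := by
  have := congrArg Matrix.conjTranspose (U1_conj_a h p)
  rw [Matrix.conjTranspose_mul, Matrix.conjTranspose_mul,
    Matrix.conjTranspose_conjTranspose, Matrix.conjTranspose_smul] at this
  rw [← mul_assoc] at this
  rw [this]
  congr 1
  rw [star_pow, Complex.star_def, Complex.conj_I]

/-- Sign for `Γ⁽²⁾`. -/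
noncomputable def eps2 (L d : ℕ) [NeZero L] (x : Site L d) : ℂ := (-1 : ℂ) ^ (mm L d x)

/-- Sign for `Γ⁽¹⁾`. -/
noncomputable def eps1 (L d : ℕ) [NeZero L] (x : Site L d) : ℂ :=
  (if Odd (coordSum L d x) then (-1:ℂ) else 1) * (-1 : ℂ) ^ (mm L d x)

lemma Utilde1_unitary_left (h : CAR a) : (Utilde1 L d a)ᴴ * Utilde1 L d a = 1 := by
  unfold Utilde1
  rw [Matrix.conjTranspose_mul]
  calc (Uodd L d a)ᴴ * (U1 L d a)ᴴ * (U1 L d a * Uodd L d a)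
      = (Uodd L d a)ᴴ * ((U1 L d a)ᴴ * U1 L d a) * Uodd L d a := by
        simp only [mul_assoc]
    _ = 1 := by rw [U1_unitary_left h, mul_one, Uodd_unitary_left h]

lemma Utilde1_unitary_right (h : CAR a) : Utilde1 L d a * (Utilde1 L d a)ᴴ = 1 := by
  unfold Utilde1
  rw [Matrix.conjTranspose_mul]
  calc U1 L d a * Uodd L d a * ((Uodd L d a)ᴴ * (U1 L d a)ᴴ)
      = U1 L d a * (Uodd L d a * (Uodd L d a)ᴴ) * (U1 L d a)ᴴ := by
        simp only [mul_assoc]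
    _ = 1 := by rw [Uodd_unitary_right h, mul_one, U1_unitary_right h]

lemma Utilde1_conj_a (h : CAR a) (p : Mode L d) :
    (Utilde1 L d a)ᴴ * op a p * Utilde1 L d a
      = (I ^ (mm L d p.1)) •
          (if Odd (coordSum L d p.1) then (op a p)ᴴ else op a p) := by
  unfold Utilde1
  rw [Matrix.conjTranspose_mul]
  have : (Uodd L d a)ᴴ * (U1 L d a)ᴴ * op a p * (U1 L d a * Uodd L d a)
      = (Uodd L d a)ᴴ * ((U1 L d a)ᴴ * op a p * U1 L d a) * Uodd L d a := by
    simp only [mul_assoc]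
  rw [this, U1_conj_a h p, Matrix.mul_smul, Matrix.smul_mul]
  congr 1
  exact Uodd_conj_a h p

lemma Utilde1_conj_ah (h : CAR a) (p : Mode L d) :
    (Utilde1 L d a)ᴴ * (op a p)ᴴ * Utilde1 L d a
      = ((-I) ^ (mm L d p.1)) •
          (if Odd (coordSum L d p.1) then op a p else (op a p)ᴴ) := by
  unfold Utilde1
  rw [Matrix.conjTranspose_mul]
  have : (Uodd L d a)ᴴ * (U1 L d a)ᴴ * (op a p)ᴴ * (U1 L d a * Uodd L d a)
      = (Uodd L d a)ᴴ * ((U1 L d a)ᴴ * (op a p)ᴴ * U1 L d a) * Uodd L d a := by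
    simp only [mul_assoc]
  rw [this, U1_conj_ah h p, Matrix.mul_smul, Matrix.smul_mul]
  congr 1
  exact Uodd_conj_ah h p

/-- Conjugation is multiplicative for a unitary. -/
lemma conj_mul_unitary {V : Matrix F F ℂ} (hV : V * Vᴴ = 1) (P Q : Matrix F F ℂ) :
    Vᴴ * (P * Q) * V = (Vᴴ * P * V) * (Vᴴ * Q * V) := by
  calc Vᴴ * (P * Q) * V = Vᴴ * P * (V * Vᴴ) * Q * V := by
        rw [hV, mul_one]; simp only [mul_assoc]
    _ = (Vᴴ * P * V) * (Vᴴ * Q * V) := by simp only [mul_assoc]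

lemma neg_I_sq_pow (m : ℕ) : ((-I) ^ m) * ((-I) ^ m) = (-1 : ℂ) ^ m := by
  rw [← mul_pow]
  norm_num [Complex.I_sq]

lemma I_sq_pow (m : ℕ) : (I ^ m) * (I ^ m) = (-1 : ℂ) ^ m := by
  rw [← mul_pow, Complex.I_mul_I]

lemma Utilde1_conj_Gamma1 (h : CAR a) (x : Site L d) :
    (Utilde1 L d a)ᴴ * Gamma1 L d a x * Utilde1 L d a
      = eps1 L d x • Gamma1 L d a x := by
  have hVr := Utilde1_unitary_right h
  have hup : a x true = op a ((x, true) : Mode L d) := rfl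
  have hdn : a x false = op a ((x, false) : Mode L d) := rfl
  have hne : ((x, true) : Mode L d) ≠ (x, false) := by simp
  have hP := conj_mul_unitary hVr ((a x true)ᴴ) ((a x false)ᴴ)
  have hQ := conj_mul_unitary hVr (a x false) (a x true)
  have hsum : (Utilde1 L d a)ᴴ * Gamma1 L d a x * Utilde1 L d a
      = (Utilde1 L d a)ᴴ * ((a x true)ᴴ * (a x false)ᴴ) * Utilde1 L d a
        + (Utilde1 L d a)ᴴ * (a x false * a x true) * Utilde1 L d a := by
    unfold Gamma1
    rw [mul_add, add_mul]
  rw [hsum, hP, hQ, hup, hdn,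
    Utilde1_conj_ah h ((x, true) : Mode L d), Utilde1_conj_ah h ((x, false) : Mode L d),
    Utilde1_conj_a h ((x, false) : Mode L d), Utilde1_conj_a h ((x, true) : Mode L d)]
  simp only [smul_mul_assoc, mul_smul_comm, smul_smul]
  by_cases hodd : Odd (coordSum L d x)
  · simp only [if_pos hodd]
    rw [car_swap h ((x,true) : Mode L d) ((x,false) : Mode L d),
      car_swap_hh h ((x,false) : Mode L d) ((x,true) : Mode L d)]
    unfold eps1 Gamma1
    rw [if_pos hodd, neg_I_sq_pow, I_sq_pow]
    rw [hup, hdn]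
    module
  · simp only [if_neg hodd]
    unfold eps1 Gamma1
    rw [if_neg hodd, neg_I_sq_pow, I_sq_pow]
    rw [hup, hdn]
    module

lemma Utilde1_conj_Gamma2 (h : CAR a) (x : Site L d) :
    (Utilde1 L d a)ᴴ * Gamma2 L d a x * Utilde1 L d a
      = eps2 L d x • Gamma2 L d a x := by
  have hVr := Utilde1_unitary_right h
  have hup : a x true = op a ((x, true) : Mode L d) := rfl
  have hdn : a x false = op a ((x, false) : Mode L d) := rfl
  have hP := conj_mul_unitary hVr ((a x true)ᴴ) ((a x false)ᴴ)
  have hQ := conj_mul_unitary hVr (a x false) (a x true)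
  have hsum : (Utilde1 L d a)ᴴ * Gamma2 L d a x * Utilde1 L d a
      = I • ((Utilde1 L d a)ᴴ * ((a x true)ᴴ * (a x false)ᴴ) * Utilde1 L d a
        - (Utilde1 L d a)ᴴ * (a x false * a x true) * Utilde1 L d a) := by
    unfold Gamma2
    rw [mul_smul_comm, smul_mul_assoc, mul_sub, sub_mul]
  rw [hsum, hP, hQ, hup, hdn,
    Utilde1_conj_ah h ((x, true) : Mode L d), Utilde1_conj_ah h ((x, false) : Mode L d),
    Utilde1_conj_a h ((x, false) : Mode L d), Utilde1_conj_a h ((x, true) : Mode L d)]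
  simp only [smul_mul_assoc, mul_smul_comm, smul_smul]
  by_cases hodd : Odd (coordSum L d x)
  · simp only [if_pos hodd]
    rw [car_swap h ((x,true) : Mode L d) ((x,false) : Mode L d),
      car_swap_hh h ((x,false) : Mode L d) ((x,true) : Mode L d)]
    unfold eps2 Gamma2
    rw [neg_I_sq_pow, I_sq_pow]
    rw [hup, hdn]
    module
  · simp only [if_neg hodd]
    unfold eps2 Gamma2
    rw [neg_I_sq_pow, I_sq_pow]
    rw [hup, hdn]
    module

/-- Parity of `coordVal` flips when adding `1`. -/
lemma even_coordVal_succ (z : ZMod (2 * L)) :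
    Even (coordVal L (z + 1)) ↔ ¬ Even (coordVal L z) := by
  have hL : 1 ≤ L := Nat.one_le_iff_ne_zero.mpr (NeZero.ne L)
  haveI : Fact (1 < 2 * L) := ⟨by omega⟩
  have hvlt : z.val < 2 * L := ZMod.val_lt z
  have hv : (z + 1).val = (z.val + 1) % (2 * L) := by
    rw [ZMod.val_add, ZMod.val_one]
  by_cases hw : z.val + 1 < 2 * L
  · have hv' : (z + 1).val = z.val + 1 := by rw [hv, Nat.mod_eq_of_lt hw]
    simp only [coordVal, Int.even_iff, hv']
    omega
  · have heq : z.val + 1 = 2 * L := by omega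
    have hv' : (z + 1).val = 0 := by rw [hv, heq, Nat.mod_self]
    simp only [coordVal, Int.even_iff, hv']
    omega

lemma shift_apply (j : Fin d) (x : Site L d) (k : Fin d) :
    shift L d j x k = if k = j then x j + 1 else x k := by
  unfold shift
  by_cases hk : k = j
  · subst hk; simp
  · simp [Function.update_of_ne hk, hk]

lemma coordSum_shift (j : Fin d) (x : Site L d) :
    coordSum L d (shift L d j x) + coordVal L (x j)
      = coordSum L d x + coordVal L (x j + 1) := by
  unfold coordSum
  have hfun : (fun k => coordVal L (shift L d j x k))
      = Function.update (fun k => coordVal L (x k)) j (coordVal L (x j + 1)) := by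
    funext k
    rw [shift_apply]
    by_cases hk : k = j
    · subst hk; simp
    · simp [Function.update_of_ne hk, hk]
  calc (∑ k, coordVal L (shift L d j x k)) + coordVal L (x j)
      = (∑ k, Function.update (fun k => coordVal L (x k)) j
          (coordVal L (x j + 1)) k) + coordVal L (x j) := by rw [hfun]
    _ = (coordVal L (x j + 1) + ∑ k ∈ Finset.univ \ {j}, coordVal L (x k))
          + coordVal L (x j) := by
        rw [Finset.sum_update_of_mem (Finset.mem_univ j)]
    _ = (∑ k, coordVal L (x k)) + coordVal L (x j + 1) := by
        rw [Finset.sum_eq_sum_sdiff_singleton_add (Finset.mem_univ j)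
          (fun k => coordVal L (x k))]
        ring

lemma parity_coordSum_shift (j : Fin d) (x : Site L d) :
    Odd (coordSum L d (shift L d j x)) ↔ ¬ Odd (coordSum L d x) := by
  have h1 := coordSum_shift j x
  have h2 := even_coordVal_succ (x j)
  rw [Int.even_iff, Int.even_iff] at h2
  rw [Int.odd_iff, Int.odd_iff]
  omega

/-- The `(-1)^mm` sign as a product over directions. -/
lemma neg_one_pow_mm (x : Site L d) :
    ((-1 : ℂ)) ^ (mm L d x)
      = ∏ k : Fin d,
          (if k.val ≠ 0 ∧ Even (coordVal L (x k)) then (-1:ℂ) else 1) := by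
  unfold mm
  rw [Finset.card_filter, ← Finset.prod_pow_eq_pow_sum]
  refine Finset.prod_congr rfl fun k _ => ?_
  by_cases hk : k.val ≠ 0 ∧ Even (coordVal L (x k)) <;> simp [hk]

lemma eps2_shift (j : Fin d) (x : Site L d) :
    (-1 : ℂ) ^ (mm L d (shift L d j x))
      = (if j.val = 0 then 1 else -1) * (-1 : ℂ) ^ (mm L d x) := by
  rw [neg_one_pow_mm, neg_one_pow_mm]
  have hfun : (fun k => if k.val ≠ 0 ∧ Even (coordVal L (shift L d j x k))
        then (-1:ℂ) else 1)
      = Function.update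
          (fun k => if k.val ≠ 0 ∧ Even (coordVal L (x k)) then (-1:ℂ) else 1) j
          (if j.val ≠ 0 ∧ Even (coordVal L (x j + 1)) then (-1:ℂ) else 1) := by
    funext k
    by_cases hk : k = j
    · subst hk; simp [shift_apply]
    · simp [Function.update_of_ne hk, shift_apply, hk]
  calc (∏ k : Fin d, (if k.val ≠ 0 ∧ Even (coordVal L (shift L d j x k))
        then (-1:ℂ) else 1))
      = (if j.val ≠ 0 ∧ Even (coordVal L (x j + 1)) then (-1:ℂ) else 1)
          * ∏ k ∈ Finset.univ \ {j},
            (if k.val ≠ 0 ∧ Even (coordVal L (x k)) then (-1:ℂ) else 1) := by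
        rw [hfun, Finset.prod_update_of_mem (Finset.mem_univ j)]
    _ = (if j.val = 0 then 1 else -1) * ∏ k : Fin d,
          (if k.val ≠ 0 ∧ Even (coordVal L (x k)) then (-1:ℂ) else 1) := by
        rw [Finset.prod_eq_mul_prod_sdiff_singleton_of_mem (Finset.mem_univ j)
          (fun k => if k.val ≠ 0 ∧ Even (coordVal L (x k)) then (-1:ℂ) else 1)]
        rw [← mul_assoc]
        congr 1
        by_cases hj0 : j.val = 0
        · simp [hj0]
        · have hflip := even_coordVal_succ (x j)
          simp only [hflip]
          by_cases he : Even (coordVal L (x j)) <;>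
            simp [hj0, he]

lemma eps1_shift (j : Fin d) (x : Site L d) :
    eps1 L d (shift L d j x)
      = (if j.val = 0 then -1 else 1) * eps1 L d x := by
  unfold eps1
  rw [eps2_shift]
  have hp := parity_coordSum_shift j x
  by_cases hodd : Odd (coordSum L d x)
  · rw [if_pos hodd, if_neg (fun hc => (hp.mp hc) hodd)]
    by_cases hj0 : j.val = 0 <;> simp [hj0] <;> ring
  · rw [if_neg hodd, if_pos (hp.mpr hodd)]
    by_cases hj0 : j.val = 0 <;> simp [hj0] <;> ring

lemma eps2_shift' (j : Fin d) (x : Site L d) :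
    eps2 L d (shift L d j x) = (if j.val = 0 then 1 else -1) * eps2 L d x := by
  unfold eps2
  exact eps2_shift j x

lemma eps2_sq (x : Site L d) : eps2 L d x * eps2 L d x = 1 := by
  unfold eps2
  rw [← mul_pow]
  norm_num

lemma eps1_sq (x : Site L d) : eps1 L d x * eps1 L d x = 1 := by
  unfold eps1
  have h2 : ((-1:ℂ)) ^ (mm L d x) * ((-1:ℂ)) ^ (mm L d x) = 1 := by
    rw [← mul_pow]; norm_num
  by_cases h : Odd (coordSum L d x)
  · rw [if_pos h]
    calc (-1:ℂ) * (-1:ℂ) ^ (mm L d x) * ((-1:ℂ) * (-1:ℂ) ^ (mm L d x))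
        = (-1:ℂ) ^ (mm L d x) * (-1:ℂ) ^ (mm L d x) := by ring
      _ = 1 := h2
  · rw [if_neg h]
    simpa using h2

lemma conj_sq {V : Matrix F F ℂ} (hVr : V * Vᴴ = 1) (M : Matrix F F ℂ) :
    Vᴴ * M ^ 2 * V = (Vᴴ * M * V) ^ 2 := by
  rw [sq, sq, conj_mul_unitary hVr]

lemma conj_HbarIntJ {V : Matrix F F ℂ} (hVr : V * Vᴴ = 1)
    (g : ℝ) (j : Fin d) (t1 t2 : ℂ)
    (hG1 : ∀ x : Site L d, Vᴴ * Gamma1 L d a x * V = eps1 L d x • Gamma1 L d a x)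
    (hG2 : ∀ x : Site L d, Vᴴ * Gamma2 L d a x * V = eps2 L d x • Gamma2 L d a x)
    (he1 : ∀ x : Site L d, eps1 L d (shift L d j x) = t1 * eps1 L d x)
    (he2 : ∀ x : Site L d, eps2 L d (shift L d j x) = t2 * eps2 L d x) :
    Vᴴ * HbarIntJ L d g a j * V
      = ((g:ℂ)/4) • ∑ x : Site L d,
            (Gamma1 L d a x + t1 • Gamma1 L d a (shift L d j x)) ^ 2
        - ((g:ℂ)/4) • ∑ x : Site L d,
            (Gamma2 L d a x - t2 • Gamma2 L d a (shift L d j x)) ^ 2 := by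
  unfold HbarIntJ
  simp only [mul_sub, sub_mul, mul_smul_comm, smul_mul_assoc,
    Finset.mul_sum, Finset.sum_mul]
  congr 1
  · congr 1
    refine Finset.sum_congr rfl fun x _ => ?_
    have hlin : Vᴴ * (Gamma1 L d a x + Gamma1 L d a (shift L d j x)) * V
        = eps1 L d x • (Gamma1 L d a x + t1 • Gamma1 L d a (shift L d j x)) := by
      rw [mul_add, add_mul, hG1 x, hG1 (shift L d j x), he1 x, smul_add,
        smul_smul, mul_comm (eps1 L d x) t1]
    rw [conj_sq hVr, hlin, smul_pow, sq, eps1_sq, one_smul]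
  · congr 1
    refine Finset.sum_congr rfl fun x _ => ?_
    have hlin : Vᴴ * (Gamma2 L d a x - Gamma2 L d a (shift L d j x)) * V
        = eps2 L d x • (Gamma2 L d a x - t2 • Gamma2 L d a (shift L d j x)) := by
      rw [mul_sub, sub_mul, hG2 x, hG2 (shift L d j x), he2 x, smul_sub,
        smul_smul, mul_comm (eps2 L d x) t2]
    rw [conj_sq hVr, hlin, smul_pow, sq, eps2_sq, one_smul]

end Aux
/-- Conjugation by `Ũ₁ = U₁ U_odd` flips the relative signs in
the quadratic forms of `H̄_int,j`: for `j = 1` (the first direction, index `0`)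
both squares become differences, and for `j = 2,…,d` both become sums. -/
theorem utilde1_interaction_conjugation (L d : ℕ) [NeZero L] [NeZero d] (hd : 3 ≤ d)
    {F : Type*} [Fintype F] [DecidableEq F]
    (a : Site L d → Bool → Matrix F F ℂ) (hCAR : CAR a)
    (hcard : Fintype.card F = 2 ^ (2 * Fintype.card (Site L d)))
    (g : ℝ) (hg : 0 ≤ g) :
    ((Utilde1 L d a)ᴴ * HbarIntJ L d g a 0 * Utilde1 L d a
      = ((g : ℂ) / 4) •
          ∑ x : Site L d, (Gamma1 L d a x - Gamma1 L d a (shift L d 0 x)) ^ 2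
        - ((g : ℂ) / 4) •
          ∑ x : Site L d, (Gamma2 L d a x - Gamma2 L d a (shift L d 0 x)) ^ 2) ∧
    (∀ j : Fin d, j.val ≠ 0 →
      (Utilde1 L d a)ᴴ * HbarIntJ L d g a j * Utilde1 L d a
        = ((g : ℂ) / 4) •
            ∑ x : Site L d, (Gamma1 L d a x + Gamma1 L d a (shift L d j x)) ^ 2
          - ((g : ℂ) / 4) •
            ∑ x : Site L d, (Gamma2 L d a x + Gamma2 L d a (shift L d j x)) ^ 2) := by
  have hVr := Utilde1_unitary_right hCAR
  have hG1 := fun x => Utilde1_conj_Gamma1 hCAR x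
  have hG2 := fun x => Utilde1_conj_Gamma2 hCAR x
  constructor
  · have hj0 : ((0 : Fin d)).val = 0 := by simp
    have he1 : ∀ x : Site L d, eps1 L d (shift L d 0 x) = (-1) * eps1 L d x := by
      intro x; rw [eps1_shift, if_pos hj0]
    have he2 : ∀ x : Site L d, eps2 L d (shift L d 0 x) = 1 * eps2 L d x := by
      intro x; rw [eps2_shift', if_pos hj0]
    rw [conj_HbarIntJ hVr g 0 (-1) 1 hG1 hG2 he1 he2]
    congr 1
    · congr 1
      refine Finset.sum_congr rfl fun x _ => ?_
      rw [neg_one_smul, ← sub_eq_add_neg]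
    · congr 1
      refine Finset.sum_congr rfl fun x _ => ?_
      rw [one_smul]
  · intro j hj
    have he1 : ∀ x : Site L d, eps1 L d (shift L d j x) = 1 * eps1 L d x := by
      intro x; rw [eps1_shift, if_neg hj]
    have he2 : ∀ x : Site L d, eps2 L d (shift L d j x) = (-1) * eps2 L d x := by
      intro x; rw [eps2_shift', if_neg hj]
    rw [conj_HbarIntJ hVr g j 1 (-1) hG1 hG2 he1 he2]
    refine congrArg₂ (· - ·) ?_ ?_
    · congr 1
      refine Finset.sum_congr rfl fun x _ => ?_
      rw [one_smul]
    · refine congrArg (((g : ℂ) / 4) • ·) ?_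
      refine Finset.sum_congr rfl fun x _ => ?_
      rw [neg_one_smul, sub_neg_eq_add]

end PiFlux
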